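/- Let a₁,…,a_n be distinct reals, ε₁,…,ε_n ∈ {-1,1}, Δᵢ(a) = εᵢ(a-aᵢ), let I ⊆ ℝ be an open interval on which Δᵢ > 0 for all i, let x(a) = ∑_{i=1}^n ξᵢ Δᵢ(a)^{-1/2} with ξᵢ ∈ ℝ, and for 1 ≤ k ≤ n set β_k(a) = ∑_{i=1}^n (ξᵢ / Δᵢ(a)^{1/2}) σ^i_{k-1}. Then on I: β₁ = x (hence β₁′ = x′); β_{k+1}′ = −a β_k′ − (1/2) β_k + σ_k x′ for 1 ≤ k ≤ n−1; and 0 = −a β_n′ − (1/2) β_n + σ_n x′. -/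

import Mathlib

open Polynomial

/-- For a polynomial `Q` of degree `d` written as `Q(X) = ∑_{k=0}^{d} (-1)^k σ_k X^{d-k}`,
`sig d Q k` is the coefficient `σ_k`, extended by `0` outside `0 ≤ k ≤ d`. -/
noncomputable def sig (d : ℕ) (Q : Polynomial ℝ) (k : ℤ) : ℝ :=
  if 0 ≤ k ∧ k ≤ (d : ℤ) then (-1 : ℝ) ^ k * Q.coeff (d - k.toNat) else 0

/-- `σ_k` for `P(X) = ∏ᵢ (X-aᵢ) = ∑_{k=0}^{n} (-1)^k σ_k X^{n-k}`. -/
noncomputable def sigma (n : ℕ) (a : Fin n → ℝ) (k : ℤ) : ℝ :=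
  sig n (∏ i, (X - C (a i))) k

/-- `σ^i_k` defined by `P(X)/(X-aᵢ) = ∑_{k=0}^{n-1} (-1)^k σ^i_k X^{n-1-k}`,
with `σ^i_{-1} = σ^i_n = 0`. -/
noncomputable def sigmaI (n : ℕ) (a : Fin n → ℝ) (i : Fin n) (k : ℤ) : ℝ :=
  sig (n - 1) (∏ j ∈ Finset.univ.erase i, (X - C (a j))) k

/-- The function `β_k(a) = ∑ᵢ (ξᵢ / Δᵢ(a)^{1/2}) σ^i_{k-1}`. -/
noncomputable def betak (n : ℕ) (a ε ξ : Fin n → ℝ) (k : ℕ) (t : ℝ) : ℝ :=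
  ∑ i, ξ i / (ε i * (t - a i)) ^ ((1/2) : ℝ) * sigmaI n a i ((k : ℤ) - 1)

/-- The function `x(a) = ∑ᵢ ξᵢ Δᵢ(a)^{-1/2}`. -/
noncomputable def xfun (n : ℕ) (a ε ξ : Fin n → ℝ) (t : ℝ) : ℝ :=
  ∑ i, ξ i * (ε i * (t - a i)) ^ (-(1/2) : ℝ)

lemma sig_rec (n : ℕ) (hn : 1 ≤ n) (a : Fin n → ℝ) (i : Fin n) (k : ℤ) :
    sigma n a k = sigmaI n a i k + a i * sigmaI n a i (k - 1) := by
  set Q : Polynomial ℝ := ∏ j ∈ Finset.univ.erase i, (X - C (a j)) with hQ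
  have hPQ : (∏ j, (X - C (a j)) : Polynomial ℝ) = (X - C (a i)) * Q :=
    (Finset.mul_prod_erase Finset.univ _ (Finset.mem_univ i)).symm
  have hQm : Q.Monic := monic_prod_of_monic _ _ fun j _ => monic_X_sub_C _
  have hQd : Q.natDegree = n - 1 := by
    rw [hQ, natDegree_prod_of_monic _ _ fun j _ => monic_X_sub_C _]
    simp [Finset.card_erase_of_mem]
  have hPm : (∏ j, (X - C (a j)) : Polynomial ℝ).Monic :=
    monic_prod_of_monic _ _ fun j _ => monic_X_sub_C _
  have hPd : (∏ j, (X - C (a j)) : Polynomial ℝ).natDegree = n := by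
    rw [natDegree_prod_of_monic _ _ fun j _ => monic_X_sub_C _]
    simp
  unfold sigma sigmaI sig
  rcases lt_or_ge k 0 with hk | hk
  · rw [if_neg (by omega), if_neg (by omega), if_neg (by omega)]; ring
  · lift k to ℕ using hk with j
    rcases lt_or_ge (n : ℤ) j with hjn | hjn
    · rw [if_neg (by omega), if_neg (by omega), if_neg (by omega)]; ring
    rcases Nat.eq_zero_or_pos j with hj0 | hj1
    · subst hj0
      rw [if_pos (by omega), if_pos (by omega), if_neg (by omega)]
      simp only [Int.toNat_natCast, Nat.sub_zero]
      have e1 := hPm.coeff_natDegree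
      have e2 := hQm.coeff_natDegree
      rw [hPd] at e1
      rw [hQd] at e2
      rw [e1, e2]; norm_num
    have hj1' : (1:ℤ) ≤ j := by exact_mod_cast hj1
    have hjn' : j ≤ n := by exact_mod_cast hjn
    have ht1 : ((j:ℤ)).toNat = j := Int.toNat_natCast j
    have ht2 : ((j:ℤ) - 1).toNat = j - 1 := by omega
    rcases eq_or_lt_of_le hjn' with hjeq | hjlt
    · rw [if_pos (by omega), if_neg (by omega), if_pos (by omega)]
      rw [ht1, ht2, hjeq]
      have h0 : (∏ j, (X - C (a j)) : Polynomial ℝ).coeff 0 = -(a i) * Q.coeff 0 := by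
        rw [hPQ, mul_coeff_zero]; simp
      rw [Nat.sub_self, show n - 1 - (n-1) = 0 from by omega, h0]
      have : ((-1:ℝ)) ^ ((n:ℤ) - 1) = -((-1:ℝ)) ^ (n:ℤ) := by
        rw [zpow_sub₀ (by norm_num : (-1:ℝ) ≠ 0)]; rw [zpow_one, div_neg, div_one]
      rw [this]; ring
    · have hjlt' : j < n := by exact_mod_cast hjlt
      rw [if_pos (by omega), if_pos (by omega), if_pos (by omega)]
      rw [ht1, ht2]
      have hc : (∏ j, (X - C (a j)) : Polynomial ℝ).coeff (n - j)
          = Q.coeff (n - 1 - j) - a i * Q.coeff (n - 1 - (j - 1)) := by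
        rw [hPQ, mul_comm]
        have h1 : n - j = (n - 1 - j) + 1 := by omega
        have h2 : n - 1 - (j - 1) = (n - 1 - j) + 1 := by omega
        rw [h1, Polynomial.coeff_mul_X_sub_C, h2]; ring
      rw [hc]
      have : ((-1:ℝ)) ^ ((j:ℤ) - 1) = -((-1:ℝ)) ^ ((j:ℤ)) := by
        rw [zpow_sub₀ (by norm_num : (-1:ℝ) ≠ 0)]; rw [zpow_one, div_neg, div_one]
      rw [this]; ring

lemma sigmaI_zero (n : ℕ) (a : Fin n → ℝ) (i : Fin n) : sigmaI n a i 0 = 1 := by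
  unfold sigmaI sig
  rw [if_pos (by omega)]
  have hQm : (∏ j ∈ Finset.univ.erase i, (X - C (a j)) : Polynomial ℝ).Monic :=
    monic_prod_of_monic _ _ fun j _ => monic_X_sub_C _
  have hQd : (∏ j ∈ Finset.univ.erase i, (X - C (a j)) : Polynomial ℝ).natDegree = n - 1 := by
    rw [natDegree_prod_of_monic _ _ fun j _ => monic_X_sub_C _]
    simp [Finset.card_erase_of_mem]
  have e2 := hQm.coeff_natDegree
  rw [hQd] at e2
  simp [e2]

lemma sigmaI_top (n : ℕ) (hn : 1 ≤ n) (a : Fin n → ℝ) (i : Fin n) :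
    sigmaI n a i (n : ℤ) = 0 := by
  unfold sigmaI sig
  rw [if_neg (by omega)]

lemma hasDerivAt_term (e b t : ℝ) (he : e * (t - b) ≠ 0) (p : ℝ) :
    HasDerivAt (fun s => (e * (s - b)) ^ p) (p * (e * (t - b)) ^ (p - 1) * e) t := by
  have h1 : HasDerivAt (fun s => e * (s - b)) e t := by
    simpa using ((hasDerivAt_id t).sub_const b).const_mul e
  have h2 := (Real.hasDerivAt_rpow_const (p := p) (x := e * (t - b)) (Or.inl he)).comp t h1
  simpa [Function.comp_def, mul_comm] using h2

lemma hasDerivAt_sum (n : ℕ) (a ε : Fin n → ℝ) (c : Fin n → ℝ) (t : ℝ)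
    (hz : ∀ i, 0 < ε i * (t - a i)) :
    HasDerivAt (fun s => ∑ i, c i * (ε i * (s - a i)) ^ (-(1/2) : ℝ))
      (∑ i, c i * (-(1/2) * (ε i * (t - a i)) ^ (-(3/2) : ℝ) * ε i)) t := by
  apply HasDerivAt.fun_sum
  intro i _
  have h := (hasDerivAt_term (ε i) (a i) t (hz i).ne' (-(1/2))).const_mul (c i)
  have he : (-(1/2) : ℝ) - 1 = -(3/2) := by norm_num
  rw [he] at h
  exact h

lemma betak_eq (n : ℕ) (a ε ξ : Fin n → ℝ) (k : ℕ) (t : ℝ)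
    (hz : ∀ i, 0 < ε i * (t - a i)) :
    betak n a ε ξ k t
      = ∑ i, (ξ i * sigmaI n a i ((k : ℤ) - 1)) * (ε i * (t - a i)) ^ (-(1/2) : ℝ) := by
  unfold betak
  refine Finset.sum_congr rfl fun i _ => ?_
  rw [Real.rpow_neg (hz i).le, div_eq_mul_inv]; ring

lemma deriv_betak (n : ℕ) (a ε ξ : Fin n → ℝ) (k : ℕ) (I : Set ℝ) (hIopen : IsOpen I)
    (hΔ : ∀ i, ∀ t ∈ I, 0 < ε i * (t - a i)) (t : ℝ) (ht : t ∈ I) :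
    deriv (betak n a ε ξ k) t
      = ∑ i, (ξ i * sigmaI n a i ((k : ℤ) - 1))
          * (-(1/2) * (ε i * (t - a i)) ^ (-(3/2) : ℝ) * ε i) := by
  have heq : betak n a ε ξ k =ᶠ[nhds t]
      (fun s => ∑ i, (ξ i * sigmaI n a i ((k : ℤ) - 1)) * (ε i * (s - a i)) ^ (-(1/2) : ℝ)) := by
    filter_upwards [hIopen.mem_nhds ht] with s hs
    exact betak_eq n a ε ξ k s (fun i => hΔ i s hs)
  rw [heq.deriv_eq]
  exact (hasDerivAt_sum n a ε _ t (fun i => hΔ i t ht)).deriv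

lemma deriv_xfun (n : ℕ) (a ε ξ : Fin n → ℝ) (t : ℝ)
    (hz : ∀ i, 0 < ε i * (t - a i)) :
    deriv (xfun n a ε ξ) t
      = ∑ i, ξ i * (-(1/2) * (ε i * (t - a i)) ^ (-(3/2) : ℝ) * ε i) := by
  have h := (hasDerivAt_sum n a ε ξ t hz).deriv
  rw [← h]
  rfl

/-- On `I`: `β₁ = x`; `β_{k+1}′ = −a β_k′ − (1/2) β_k + σ_k x′` for
`1 ≤ k ≤ n−1`; and `0 = −a β_n′ − (1/2) β_n + σ_n x′`. -/
theorem stmt8 (n : ℕ) (hn : 1 ≤ n) (a : Fin n → ℝ) (ha : Function.Injective a)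
    (ε : Fin n → ℝ) (hε : ∀ i, ε i = 1 ∨ ε i = -1)
    (I : Set ℝ) (hIopen : IsOpen I) (hIconn : I.OrdConnected)
    (hΔ : ∀ i, ∀ t ∈ I, 0 < ε i * (t - a i))
    (ξ : Fin n → ℝ) :
    (∀ t ∈ I, betak n a ε ξ 1 t = xfun n a ε ξ t) ∧
    (∀ k : ℕ, 1 ≤ k → k + 1 ≤ n → ∀ t ∈ I,
      deriv (betak n a ε ξ (k + 1)) t =
        -t * deriv (betak n a ε ξ k) t - (1/2) * betak n a ε ξ k t +
          sigma n a (k : ℤ) * deriv (xfun n a ε ξ) t) ∧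
    (∀ t ∈ I,
      0 = -t * deriv (betak n a ε ξ n) t - (1/2) * betak n a ε ξ n t +
          sigma n a (n : ℤ) * deriv (xfun n a ε ξ) t) := by
  refine ⟨?_, ?_, ?_⟩
  · intro t ht
    rw [betak_eq n a ε ξ 1 t (fun i => hΔ i t ht)]
    unfold xfun
    refine Finset.sum_congr rfl fun i _ => ?_
    norm_num [sigmaI_zero]
  · intro k hk hkn t ht
    have hz : ∀ i, 0 < ε i * (t - a i) := fun i => hΔ i t ht
    rw [deriv_betak n a ε ξ (k+1) I hIopen hΔ t ht, deriv_betak n a ε ξ k I hIopen hΔ t ht,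
      betak_eq n a ε ξ k t hz, deriv_xfun n a ε ξ t hz,
      Finset.mul_sum, Finset.mul_sum, Finset.mul_sum, ← Finset.sum_sub_distrib,
      ← Finset.sum_add_distrib]
    refine Finset.sum_congr rfl fun i _ => ?_
    have hsplit : (ε i * (t - a i)) ^ (-(1/2) : ℝ)
        = (ε i * (t - a i)) * (ε i * (t - a i)) ^ (-(3/2) : ℝ) := by
      have := Real.rpow_add (hz i) 1 (-(3/2))
      norm_num [Real.rpow_one] at this
      rw [← this]
    have hidx : ((k + 1 : ℕ) : ℤ) - 1 = (k : ℤ) := by push_cast; ring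
    rw [hidx, hsplit, sig_rec n hn a i (k : ℤ)]
    ring
  · intro t ht
    have hz : ∀ i, 0 < ε i * (t - a i) := fun i => hΔ i t ht
    rw [deriv_betak n a ε ξ n I hIopen hΔ t ht, betak_eq n a ε ξ n t hz,
      deriv_xfun n a ε ξ t hz,
      Finset.mul_sum, Finset.mul_sum, Finset.mul_sum, ← Finset.sum_sub_distrib,
      ← Finset.sum_add_distrib]
    symm
    apply Finset.sum_eq_zero
    intro i _
    have hsplit : (ε i * (t - a i)) ^ (-(1/2) : ℝ)
        = (ε i * (t - a i)) * (ε i * (t - a i)) ^ (-(3/2) : ℝ) := by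
      have := Real.rpow_add (hz i) 1 (-(3/2))
      norm_num [Real.rpow_one] at this
      rw [← this]
    rw [hsplit, sig_rec n hn a i (n : ℤ), sigmaI_top n hn a i]
    ring
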